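/- Let V be a finite-dimensional real inner product space, p and q positive integers, and J : V → V a linear map with J² = p·J + q·id that is self-adjoint: ⟨J x, y⟩ = ⟨x, J y⟩ for all x, y ∈ V. Let W ⊆ V be a subspace with orthogonal projection P, set T x = P(J x) and N x = (id − P)(J x), and let D ⊆ W be a subspace that is slant with angle θ, i.e. ‖T x‖² = cos²θ · ‖J x‖² for every x ∈ D. Then for all x, y ∈ D: ⟨N x, N y⟩ = sin²θ · ( p·⟨T x, y⟩ + q·⟨x, y⟩ ). -/

import Mathlib

open RealInnerProductSpace

/-- For a slant subspace `D ⊆ W` with slant angle `θ`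
(`‖T x‖² = cos²θ · ‖J x‖²` on `D`), the normal parts satisfy
`⟪N x, N y⟫ = sin²θ · (p·⟪T x, y⟫ + q·⟪x, y⟫)` for all `x, y ∈ D`. -/
theorem slant_inner_N {V : Type*} [NormedAddCommGroup V] [InnerProductSpace ℝ V]
    [FiniteDimensional ℝ V]
    (p q : ℕ) (hp : 0 < p) (hq : 0 < q) (J : V →ₗ[ℝ] V)
    (hJ2 : ∀ x : V, J (J x) = (p : ℝ) • J x + (q : ℝ) • x)
    (hsym : ∀ x y : V, ⟪J x, y⟫ = ⟪x, J y⟫)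
    (W : Submodule ℝ V)
    (T : V → V) (hT : ∀ x : V, T x = (W.orthogonalProjection (J x) : V))
    (N : V → V) (hN : ∀ x : V, N x = J x - (W.orthogonalProjection (J x) : V))
    (D : Submodule ℝ V) (hD : D ≤ W) (θ : ℝ)
    (hslant : ∀ x ∈ D, ‖T x‖ ^ 2 = Real.cos θ ^ 2 * ‖J x‖ ^ 2) :
    ∀ x ∈ D, ∀ y ∈ D,
      ⟪N x, N y⟫ = Real.sin θ ^ 2 * ((p : ℝ) * ⟪T x, y⟫ + (q : ℝ) * ⟪x, y⟫) := by
  -- N x is orthogonal to W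
  have hNperp : ∀ x : V, ∀ w ∈ W, ⟪N x, w⟫ = 0 := by
    intro x w hw
    rw [hN x, real_inner_comm]
    exact (Submodule.sub_starProjection_mem_orthogonal (K := W) (J x)) w hw
  have hTW : ∀ x : V, T x ∈ W := by
    intro x; rw [hT x]; exact (W.orthogonalProjection (J x)).2
  have hJsplit : ∀ x : V, J x = T x + N x := by
    intro x; rw [hT x, hN x]; abel
  -- ⟪J x, w⟫ = ⟪T x, w⟫ for w ∈ W
  have hJw : ∀ x : V, ∀ w ∈ W, ⟪J x, w⟫ = ⟪T x, w⟫ := by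
    intro x w hw
    rw [hJsplit x, inner_add_left, hNperp x w hw, add_zero]
  have hTadd : ∀ x y : V, T (x + y) = T x + T y := by
    intro x y
    simp [hT, map_add]
  -- diagonal identity
  have hdiag : ∀ x ∈ D, ⟪T x, T x⟫ = Real.cos θ ^ 2 * ⟪J x, J x⟫ := by
    intro x hx
    rw [real_inner_self_eq_norm_sq, real_inner_self_eq_norm_sq]
    exact hslant x hx
  -- polarization: ⟪T x, T y⟫ = cos²θ ⟪J x, J y⟫ on D
  have hTT : ∀ x ∈ D, ∀ y ∈ D, ⟪T x, T y⟫ = Real.cos θ ^ 2 * ⟪J x, J y⟫ := by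
    intro x hx y hy
    have h1 := hdiag (x + y) (D.add_mem hx hy)
    rw [hTadd, map_add] at h1
    simp only [inner_add_add_self] at h1
    rw [hdiag x hx, hdiag y hy] at h1
    have c1 := real_inner_comm (T x) (T y)
    have c2 := real_inner_comm (J x) (J y)
    nlinarith [h1, c1, c2]
  intro x hx y hy
  have hxW : x ∈ W := hD hx
  have hyW : y ∈ W := hD hy
  -- ⟪J x, J y⟫ = p ⟪T x, y⟫ + q ⟪x, y⟫
  have hJJ : ⟪J x, J y⟫ = (p : ℝ) * ⟪T x, y⟫ + (q : ℝ) * ⟪x, y⟫ := by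
    rw [hsym, hJ2, inner_add_right, real_inner_smul_right, real_inner_smul_right,
      ← hsym, hJw x y hyW]
  -- main expansion: ⟪N x, N y⟫ = ⟪J x, J y⟫ - ⟪T x, T y⟫
  have hmain : ⟪N x, N y⟫ = ⟪J x, J y⟫ - ⟪T x, T y⟫ := by
    have h1 : ⟪J x, J y⟫ = ⟪T x + N x, T y + N y⟫ := by rw [← hJsplit, ← hJsplit]
    rw [inner_add_left, inner_add_right, inner_add_right] at h1
    have e1 : ⟪T x, N y⟫ = 0 := by rw [real_inner_comm]; exact hNperp y (T x) (hTW x)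
    have e2' : ⟪N x, T y⟫ = (0:ℝ) := hNperp x (T y) (hTW y)
    rw [e1, e2'] at h1
    linarith
  have hcs : ⟪T x, N y⟫ = 0 := by
    rw [real_inner_comm]; exact hNperp y (T x) (hTW x)
  rw [hmain, hTT x hx y hy, hJJ]
  have : Real.sin θ ^ 2 = 1 - Real.cos θ ^ 2 := by
    have := Real.sin_sq_add_cos_sq θ; linarith
  rw [this]; ring
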